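/- Let X be a real Hilbert space, B a subset of X, and f : B → ℝ, G : B → X bounded functions satisfying condition (C): f(x) ≥ f(y) + ⟨G(y), x − y⟩ for all x, y ∈ B. Define m : X → ℝ by m(x) = sup_{z∈B} { f(z) + ⟨G(z), x − z⟩ }. Then m is convex and Lipschitz with constant sup_{z∈B} ‖G(z)‖, m = f on B, and for every x ∈ B the vector G(x) belongs to the subdifferential ∂m(x), i.e., m(w) ≥ m(x) + ⟨G(x), w − x⟩ for all w ∈ X. -/
import Mathlib


open Set

local notation "⟪" x ", " y "⟫" => @inner ℝ _ _ x y

/-- properties of the minimal extension m of the jet (f, G). -/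
theorem minimal_extension_properties
    {X : Type*} [NormedAddCommGroup X] [InnerProductSpace ℝ X] [CompleteSpace X]
    (B : Set X) (f : X → ℝ) (G : X → X)
    (hfbd : ∃ Mf : ℝ, ∀ z ∈ B, |f z| ≤ Mf) (hGbd : ∃ MG : ℝ, ∀ z ∈ B, ‖G z‖ ≤ MG)
    (hC : ∀ x ∈ B, ∀ y ∈ B, f x ≥ f y + ⟪G y, x - y⟫)
    (m : X → ℝ) (hm : ∀ x : X, m x = sSup ((fun z => f z + ⟪G z, x - z⟫) '' B)) :
    ConvexOn ℝ univ m ∧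
    (∀ x x' : X, |m x - m x'| ≤ sSup ((fun z => ‖G z‖) '' B) * ‖x - x'‖) ∧
    (∀ x ∈ B, m x = f x) ∧
    (∀ x ∈ B, ∀ w : X, m w ≥ m x + ⟪G x, w - x⟫) := by
  rcases B.eq_empty_or_nonempty with hB | ⟨y₀, hy₀⟩
  · subst hB
    have hm0 : ∀ x : X, m x = 0 := by
      intro x; rw [hm x]; simp [Real.sSup_empty]
    refine ⟨?_, ?_, ?_, ?_⟩
    · have : m = fun _ => (0 : ℝ) := funext hm0
      rw [this]; exact convexOn_const 0 convex_univ
    · intro x x'; simp [hm0, Real.sSup_empty]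
    · intro x hx; simp at hx
    · intro x hx; simp at hx
  · obtain ⟨MG, hMG⟩ := hGbd
    -- bounded above
    have hbdd : ∀ x : X, BddAbove ((fun z => f z + ⟪G z, x - z⟫) '' B) := by
      intro x
      refine ⟨f y₀ + MG * ‖x - y₀‖, ?_⟩
      rintro _ ⟨z, hz, rfl⟩
      have h1 : f z + ⟪G z, y₀ - z⟫ ≤ f y₀ := by
        have := hC y₀ hy₀ z hz; linarith
      have h2 : ⟪G z, x - z⟫ = ⟪G z, y₀ - z⟫ + ⟪G z, x - y₀⟫ := by
        rw [← inner_add_right]; congr 1; abel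
      have h3 : ⟪G z, x - y₀⟫ ≤ MG * ‖x - y₀‖ := by
        calc ⟪G z, x - y₀⟫ ≤ ‖G z‖ * ‖x - y₀‖ := real_inner_le_norm _ _
          _ ≤ MG * ‖x - y₀‖ := by
            apply mul_le_mul_of_nonneg_right (hMG z hz) (norm_nonneg _)
      dsimp only
      linarith
    have hne : ∀ x : X, ((fun z => f z + ⟪G z, x - z⟫) '' B).Nonempty :=
      fun x => ⟨_, ⟨y₀, hy₀, rfl⟩⟩
    have hle : ∀ x : X, ∀ z ∈ B, f z + ⟪G z, x - z⟫ ≤ m x := by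
      intro x z hz; rw [hm x]; exact le_csSup (hbdd x) ⟨z, hz, rfl⟩
    have hsup : ∀ (x : X) (c : ℝ), (∀ z ∈ B, f z + ⟪G z, x - z⟫ ≤ c) → m x ≤ c := by
      intro x c h; rw [hm x]
      exact csSup_le (hne x) (by rintro _ ⟨z, hz, rfl⟩; exact h z hz)
    -- m = f on B
    have hmf : ∀ x ∈ B, m x = f x := by
      intro x hx
      apply le_antisymm
      · apply hsup
        intro z hz
        have := hC x hx z hz; linarith
      · have := hle x x hx
        simpa using this
    -- Lipschitz constant
    set L := sSup ((fun z => ‖G z‖) '' B) with hL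
    have hLbdd : BddAbove ((fun z => ‖G z‖) '' B) :=
      ⟨MG, by rintro _ ⟨z, hz, rfl⟩; exact hMG z hz⟩
    have hLge : ∀ z ∈ B, ‖G z‖ ≤ L := fun z hz => le_csSup hLbdd ⟨z, hz, rfl⟩
    have key : ∀ x x' : X, m x ≤ m x' + L * ‖x - x'‖ := by
      intro x x'
      apply hsup
      intro z hz
      have h2 : ⟪G z, x - z⟫ = ⟪G z, x' - z⟫ + ⟪G z, x - x'⟫ := by
        rw [← inner_add_right]; congr 1; abel
      have h3 : ⟪G z, x - x'⟫ ≤ L * ‖x - x'‖ := by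
        calc ⟪G z, x - x'⟫ ≤ ‖G z‖ * ‖x - x'‖ := real_inner_le_norm _ _
          _ ≤ L * ‖x - x'‖ := mul_le_mul_of_nonneg_right (hLge z hz) (norm_nonneg _)
      have h4 := hle x' z hz
      linarith
    refine ⟨?_, ?_, hmf, ?_⟩
    · refine ⟨convex_univ, ?_⟩
      intro x _ y _ a b ha hb hab
      apply hsup
      intro z hz
      have hsplit : ⟪G z, a • x + b • y - z⟫ = a * ⟪G z, x - z⟫ + b * ⟪G z, y - z⟫ := by
        have : a • x + b • y - z = a • (x - z) + b • (y - z) := by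
          have hz1 : z = (a + b) • z := by rw [hab, one_smul]
          rw [smul_sub, smul_sub]
          conv_lhs => rw [hz1]
          rw [add_smul]
          abel
        rw [this, inner_add_right, real_inner_smul_right, real_inner_smul_right]
      have h1 := hle x z hz
      have h2 := hle y z hz
      have hfz : f z = a * f z + b * f z := by
        rw [← add_mul, hab, one_mul]
      calc f z + ⟪G z, a • x + b • y - z⟫
          = a * (f z + ⟪G z, x - z⟫) + b * (f z + ⟪G z, y - z⟫) := by
            rw [hsplit]; nlinarith [hfz]
        _ ≤ a * m x + b * m y := by
            have := mul_le_mul_of_nonneg_left h1 ha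
            have := mul_le_mul_of_nonneg_left h2 hb
            linarith
        _ = a • m x + b • m y := by simp [smul_eq_mul]
    · intro x x'
      rw [abs_sub_le_iff]
      constructor
      · have := key x x'; linarith
      · have := key x' x
        rw [show ‖x' - x‖ = ‖x - x'‖ from norm_sub_rev _ _] at this
        linarith
    · intro x hx w
      have := hle w x hx
      rw [hmf x hx]
      linarith
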